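/- The Gaspari–Cohn function $S$ is monotone nonincreasing on $[0,2]$. -/

import Mathlib

/-- The Gaspari–Cohn tapering function on `[0, ∞)`. -/
noncomputable def gaspariCohn (x : ℝ) : ℝ :=
  if x < 1 then -(1/4)*x^5 + (1/2)*x^4 + (5/8)*x^3 - (5/3)*x^2 + 1
  else if x ≤ 2 then (1/12)*x^5 - (1/2)*x^4 + (5/8)*x^3 + (5/3)*x^2 - 5*x + 4 - 2/(3*x)
  else 0

private noncomputable def gcA (x : ℝ) : ℝ :=
  -(1/4)*x^5 + (1/2)*x^4 + (5/8)*x^3 - (5/3)*x^2 + 1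

private noncomputable def gcB (x : ℝ) : ℝ :=
  (1/12)*x^5 - (1/2)*x^4 + (5/8)*x^3 + (5/3)*x^2 - 5*x + 4 - 2/(3*x)

private lemma gc_eqA : Set.EqOn gaspariCohn gcA (Set.Icc 0 1) := by
  intro x hx
  rcases lt_or_eq_of_le hx.2 with h | h
  · simp [gaspariCohn, gcA, h]
  · subst h
    norm_num [gaspariCohn, gcA]

private lemma gc_eqB : Set.EqOn gaspariCohn gcB (Set.Icc 1 2) := by
  intro x hx
  have h1 : ¬ x < 1 := not_lt.2 hx.1
  simp [gaspariCohn, gcB, h1, hx.2]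

private lemma gcA_hasDeriv (x : ℝ) :
    HasDerivAt gcA (-(5/4)*x^4 + 2*x^3 + (15/8)*x^2 - (10/3)*x) x := by
  have : HasDerivAt gcA
      (-(1/4)*(5*x^4) + (1/2)*(4*x^3) + (5/8)*(3*x^2) - (5/3)*(2*x) + 0) x := by
    unfold gcA
    apply HasDerivAt.add
    apply HasDerivAt.sub
    apply HasDerivAt.add
    apply HasDerivAt.add
    · simpa using (hasDerivAt_pow 5 x).const_mul (-(1/4) : ℝ)
    · simpa using (hasDerivAt_pow 4 x).const_mul ((1/2) : ℝ)
    · simpa using (hasDerivAt_pow 3 x).const_mul ((5/8) : ℝ)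
    · simpa using (hasDerivAt_pow 2 x).const_mul ((5/3) : ℝ)
    · exact hasDerivAt_const x 1
  convert this using 1
  ring

private lemma gcB_hasDeriv {x : ℝ} (hx : x ≠ 0) :
    HasDerivAt gcB ((5/12)*x^4 - 2*x^3 + (15/8)*x^2 + (10/3)*x - 5 + 2/(3*x^2)) x := by
  have hpoly : HasDerivAt (fun x : ℝ =>
      (1/12)*x^5 - (1/2)*x^4 + (5/8)*x^3 + (5/3)*x^2 - 5*x + 4)
      ((1/12)*(5*x^4) - (1/2)*(4*x^3) + (5/8)*(3*x^2) + (5/3)*(2*x) - 5 + 0) x := by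
    apply HasDerivAt.add
    apply HasDerivAt.sub
    apply HasDerivAt.add
    apply HasDerivAt.add
    apply HasDerivAt.sub
    · simpa using (hasDerivAt_pow 5 x).const_mul ((1/12) : ℝ)
    · simpa using (hasDerivAt_pow 4 x).const_mul ((1/2) : ℝ)
    · simpa using (hasDerivAt_pow 3 x).const_mul ((5/8) : ℝ)
    · simpa using (hasDerivAt_pow 2 x).const_mul ((5/3) : ℝ)
    · simpa using (hasDerivAt_id x).const_mul (5 : ℝ)
    · exact hasDerivAt_const x 4
  have hinv : HasDerivAt (fun x : ℝ => 2/(3*x)) ((2/3) * -(x^2)⁻¹) x := by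
    have h := (hasDerivAt_inv hx).const_mul (2/3 : ℝ)
    have heq : (fun x : ℝ => 2/(3*x)) = fun x : ℝ => (2/3) * x⁻¹ := by
      funext y; rw [div_eq_mul_inv, div_eq_mul_inv, mul_inv]; ring
    rw [heq]; exact h
  have h : HasDerivAt (fun y : ℝ =>
      (1/12)*y^5 - (1/2)*y^4 + (5/8)*y^3 + (5/3)*y^2 - 5*y + 4 - 2/(3*y)) _ x := hpoly.sub hinv
  have hfun : gcB = fun x : ℝ =>
      (1/12)*x^5 - (1/2)*x^4 + (5/8)*x^3 + (5/3)*x^2 - 5*x + 4 - 2/(3*x) := rfl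
  rw [hfun]
  convert h using 1
  field_simp
  ring

private lemma gcA_antitone : AntitoneOn gcA (Set.Icc (0:ℝ) 1) := by
  apply antitoneOn_of_deriv_nonpos (convex_Icc 0 1)
  · exact fun x _ => (gcA_hasDeriv x).continuousAt.continuousWithinAt
  · exact fun x _ => (gcA_hasDeriv x).differentiableAt.differentiableWithinAt
  · intro x hx
    rw [interior_Icc] at hx
    rw [(gcA_hasDeriv x).deriv]
    obtain ⟨h0, h1⟩ := hx
    nlinarith [mul_pos h0 h0, mul_pos (mul_pos h0 h0) h0, sq_nonneg x,
      mul_nonneg h0.le (sub_nonneg.2 h1.le), mul_nonneg (mul_nonneg h0.le h0.le) (sub_nonneg.2 h1.le)]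

private lemma gcB_antitone : AntitoneOn gcB (Set.Icc (1:ℝ) 2) := by
  apply antitoneOn_of_deriv_nonpos (convex_Icc 1 2)
  · intro x hx
    have hx0 : x ≠ 0 := by have := hx.1; linarith
    exact (gcB_hasDeriv hx0).continuousAt.continuousWithinAt
  · intro x hx
    rw [interior_Icc] at hx
    have hx0 : x ≠ 0 := by have := hx.1; linarith
    exact (gcB_hasDeriv hx0).differentiableAt.differentiableWithinAt
  · intro x hx
    rw [interior_Icc] at hx
    obtain ⟨h1, h2⟩ := hx
    have hx0 : x ≠ 0 := by linarith
    rw [(gcB_hasDeriv hx0).deriv]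
    have hx2 : (0:ℝ) < x^2 := by positivity
    have hc : (0:ℝ) ≤ (5/4)*x^3+(3/2)*x^2-(3/8)*x-1/4 := by nlinarith
    have hpoly : (5/4)*x^6 - 6*x^5 + (45/8)*x^4 + 10*x^3 - 15*x^2 + 2 ≤ 0 := by
      nlinarith [mul_nonneg (mul_nonneg (sub_nonneg.2 h2.le) (sq_nonneg (x-2))) hc]
    have key : (5/12)*x^4 - 2*x^3 + (15/8)*x^2 + (10/3)*x - 5 + 2/(3*x^2)
        = ((5/4)*x^6 - 6*x^5 + (45/8)*x^4 + 10*x^3 - 15*x^2 + 2) / (3*x^2) := by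
      field_simp; ring
    rw [key]
    exact div_nonpos_of_nonpos_of_nonneg hpoly (by positivity)

theorem gaspariCohn_antitoneOn : AntitoneOn gaspariCohn (Set.Icc (0 : ℝ) 2) := by
  intro a ha b hb hab
  by_cases hb1 : b ≤ 1
  · have ha1 : a ∈ Set.Icc (0:ℝ) 1 := ⟨ha.1, le_trans hab hb1⟩
    have hb1' : b ∈ Set.Icc (0:ℝ) 1 := ⟨hb.1, hb1⟩
    rw [gc_eqA ha1, gc_eqA hb1']
    exact gcA_antitone ha1 hb1' hab
  · push_neg at hb1
    by_cases ha1 : 1 ≤ a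
    · have ha' : a ∈ Set.Icc (1:ℝ) 2 := ⟨ha1, ha.2⟩
      have hb' : b ∈ Set.Icc (1:ℝ) 2 := ⟨hb1.le, hb.2⟩
      rw [gc_eqB ha', gc_eqB hb']
      exact gcB_antitone ha' hb' hab
    · push_neg at ha1
      have ha' : a ∈ Set.Icc (0:ℝ) 1 := ⟨ha.1, ha1.le⟩
      have hb' : b ∈ Set.Icc (1:ℝ) 2 := ⟨hb1.le, hb.2⟩
      have h1A : (1:ℝ) ∈ Set.Icc (0:ℝ) 1 := by norm_num
      have h1B : (1:ℝ) ∈ Set.Icc (1:ℝ) 2 := by norm_num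
      calc gaspariCohn b = gcB b := gc_eqB hb'
        _ ≤ gcB 1 := gcB_antitone h1B hb' hb1.le
        _ = gaspariCohn 1 := (gc_eqB h1B).symm
        _ = gcA 1 := gc_eqA h1A
        _ ≤ gcA a := gcA_antitone ha' h1A ha1.le
        _ = gaspariCohn a := (gc_eqA ha').symm
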